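/- Let Λ^∨ ⊆ Λ be free ℤ-modules of the same finite rank with an automorphism F of finite order preserving both, and let e ≥ 1. Let G = ⟨F⟩ and define B = image(H¹(G, Λ^∨) → H¹(G, Λ)). Then |(Λ/eΛ^∨)^F| = |(Λ/Λ^∨)^F| · |B[e]| · e^r, where r = rank(Λ^F). -/

import Mathlib

open Submodule LinearMap

section BDAux

variable {Λ : Type*} [AddCommGroup Λ]

/-- Relative index of two `ℤ`-submodules. -/
noncomputable def BDrel (H K : Submodule ℤ Λ) : ℕ :=
  H.toAddSubgroup.relIndex K.toAddSubgroup

lemma BDrel_eq_card (H K : Submodule ℤ Λ) :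
    BDrel H K = Nat.card (↥K ⧸ H.comap K.subtype) := rfl

lemma BDindex_eq_card (S : Submodule ℤ Λ) :
    S.toAddSubgroup.index = Nat.card (Λ ⧸ S) := rfl

lemma BDrel_mul_index {H K : Submodule ℤ Λ} (h : H ≤ K) :
    BDrel H K * K.toAddSubgroup.index = H.toAddSubgroup.index :=
  AddSubgroup.relIndex_mul_index (fun x hx => h hx)

lemma BDrel_mul_BDrel {H K L : Submodule ℤ Λ} (h1 : H ≤ K) (h2 : K ≤ L) :
    BDrel H K * BDrel K L = BDrel H L :=
  AddSubgroup.relIndex_mul_relIndex _ _ _ (fun x hx => h1 hx) (fun x hx => h2 hx)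

lemma BDrel_sup_right (H K : Submodule ℤ Λ) : BDrel K (H ⊔ K) = BDrel K H := by
  unfold BDrel
  rw [Submodule.sup_toAddSubgroup]
  exact AddSubgroup.relIndex_sup_right (H := H.toAddSubgroup) (K := K.toAddSubgroup)

lemma BD_toAdd_inf (H K : Submodule ℤ Λ) :
    (H ⊓ K).toAddSubgroup = H.toAddSubgroup ⊓ K.toAddSubgroup := by
  ext x; rfl

lemma BDrel_inf_right (H K : Submodule ℤ Λ) : BDrel (H ⊓ K) K = BDrel H K := by
  unfold BDrel
  rw [BD_toAdd_inf]
  exact AddSubgroup.inf_relIndex_right (H := H.toAddSubgroup) (K := K.toAddSubgroup)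

/-- ker and coker of an endomorphism of a finite abelian group have the same size. -/
lemma BD_card_ker_eq_card_coker {M : Type*} [AddCommGroup M] [Finite M] (g : M →ₗ[ℤ] M) :
    Nat.card (LinearMap.ker g) = Nat.card (M ⧸ LinearMap.range g) := by
  have h1 := Submodule.card_eq_card_quotient_mul_card (LinearMap.range g)
  have h2 := Submodule.card_eq_card_quotient_mul_card (LinearMap.ker g)
  have h3 : Nat.card (M ⧸ LinearMap.ker g) = Nat.card (LinearMap.range g) :=
    Nat.card_congr g.quotKerEquivRange.toEquiv
  have hr : 0 < Nat.card (LinearMap.range g) := Nat.card_pos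
  rw [h3, mul_comm] at h2
  rw [h2] at h1
  exact (Nat.eq_of_mul_eq_mul_left hr h1.symm).symm

/-- A f.g. `ℤ`-module whose quotient by `T` is killed by `k ≠ 0` has finite quotient. -/
lemma BD_finite_quotient {M : Type*} [AddCommGroup M] [Module.Finite ℤ M] (T : Submodule ℤ M)
    (k : ℕ) (hk : k ≠ 0) (h : ∀ x : M, (k : ℤ) • x ∈ T) : Finite (M ⧸ T) := by
  apply Module.finite_of_fg_torsion
  intro x
  obtain ⟨y, rfl⟩ := Submodule.Quotient.mk_surjective T x
  refine ⟨⟨(k : ℤ), mem_nonZeroDivisors_of_ne_zero (by exact_mod_cast hk)⟩, ?_⟩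
  rw [Submonoid.smul_def]
  show ((k : ℤ) • Submodule.Quotient.mk y : M ⧸ T) = 0
  rw [← Submodule.Quotient.mk_smul, Submodule.Quotient.mk_eq_zero]
  exact h y

/-- The quotient of a finite free `ℤ`-module by `e` times itself has `e ^ rank` elements. -/
lemma BD_card_quotient_smul_self (M : Type*) [AddCommGroup M] [Module.Free ℤ M]
    [Module.Finite ℤ M] (e : ℕ) :
    Nat.card (M ⧸ LinearMap.range ((e : ℤ) • (LinearMap.id : M →ₗ[ℤ] M)))
      = e ^ Module.finrank ℤ M := by
  classical
  set ι := Module.Free.ChooseBasisIndex ℤ M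
  have b : Module.Basis ι ℤ M := Module.Free.chooseBasis ℤ M
  let φ : M ≃ₗ[ℤ] (ι → ℤ) := b.equivFun
  have hmap : (LinearMap.range ((e : ℤ) • (LinearMap.id : M →ₗ[ℤ] M))).map (φ : M →ₗ[ℤ] (ι → ℤ))
      = LinearMap.range ((e : ℤ) • (LinearMap.id : (ι → ℤ) →ₗ[ℤ] (ι → ℤ))) := by
    ext x
    simp only [Submodule.mem_map, LinearMap.mem_range, LinearMap.smul_apply,
      LinearMap.id_apply]
    constructor
    · rintro ⟨y, ⟨z, rfl⟩, rfl⟩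
      exact ⟨φ z, by rw [map_smul]; rfl⟩
    · rintro ⟨y, rfl⟩
      exact ⟨(e : ℤ) • φ.symm y, ⟨φ.symm y, rfl⟩, by rw [map_smul, LinearEquiv.coe_coe, φ.apply_symm_apply]⟩
  have e1 := (Submodule.Quotient.equiv _ _ φ hmap).toEquiv
  rw [Nat.card_congr e1]
  have hpi : LinearMap.range ((e : ℤ) • (LinearMap.id : (ι → ℤ) →ₗ[ℤ] (ι → ℤ)))
      = Submodule.pi Set.univ (fun _ : ι => (Ideal.span {(e : ℤ)} : Submodule ℤ ℤ)) := by
    ext x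
    simp only [LinearMap.mem_range, LinearMap.smul_apply, LinearMap.id_apply,
      Submodule.mem_pi, Set.mem_univ, forall_true_left, Ideal.mem_span_singleton]
    constructor
    · rintro ⟨y, rfl⟩ i
      exact ⟨y i, by simp [mul_comm]⟩
    · intro hdvd
      choose c hc using hdvd
      exact ⟨c, funext fun i => by simpa [mul_comm] using (hc i).symm⟩
  rw [hpi, Nat.card_congr (Submodule.quotientPi _).toEquiv, Nat.card_pi]
  have hz : Nat.card (ℤ ⧸ (Ideal.span {(e : ℤ)} : Submodule ℤ ℤ)) = e := by
    rw [Nat.card_congr (Int.quotientSpanNatEquivZMod e).toEquiv, Nat.card_zmod]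
  simp only [hz, Finset.prod_const, Finset.card_univ]
  rw [Module.finrank_eq_card_chooseBasisIndex ℤ M]

section FreeAmbient

variable [Module.Free ℤ Λ] [Module.Finite ℤ Λ]

lemma BD_comap_subtype_map_smul (S : Submodule ℤ Λ) (e : ℕ) :
    (Submodule.map ((e : ℤ) • (LinearMap.id : Λ →ₗ[ℤ] Λ)) S).comap S.subtype
      = LinearMap.range ((e : ℤ) • (LinearMap.id : ↥S →ₗ[ℤ] ↥S)) := by
  ext ⟨x, hx⟩
  simp only [Submodule.mem_comap, Submodule.coe_subtype, Submodule.mem_map,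
    LinearMap.mem_range, LinearMap.smul_apply, LinearMap.id_apply]
  constructor
  · rintro ⟨y, hy, rfl⟩
    exact ⟨⟨y, hy⟩, rfl⟩
  · rintro ⟨⟨y, hy⟩, hxy⟩
    exact ⟨y, hy, congrArg Subtype.val hxy⟩

lemma BDrel_map_smul_self (S : Submodule ℤ Λ) (e : ℕ) :
    BDrel (Submodule.map ((e : ℤ) • (LinearMap.id : Λ →ₗ[ℤ] Λ)) S) S
      = e ^ Module.finrank ℤ ↥S := by
  haveI : IsNoetherian ℤ Λ := isNoetherian_of_isNoetherianRing_of_finite ℤ Λ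
  rw [BDrel_eq_card, BD_comap_subtype_map_smul]
  exact BD_card_quotient_smul_self ↥S e

lemma BD_finrank_eq_of_le_of_smul {T S : Submodule ℤ Λ} (hTS : T ≤ S) (k : ℕ) (hk : k ≠ 0)
    (h : ∀ x ∈ S, (k : ℤ) • x ∈ T) :
    Module.finrank ℤ ↥T = Module.finrank ℤ ↥S := by
  haveI : IsNoetherian ℤ Λ := isNoetherian_of_isNoetherianRing_of_finite ℤ Λ
  apply le_antisymm
  · exact LinearMap.finrank_le_finrank_of_injective (Submodule.inclusion_injective hTS)
  · let g : ↥S →ₗ[ℤ] ↥T :=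
      { toFun := fun x => ⟨(k : ℤ) • (x : Λ), h x x.2⟩
        map_add' := fun x y => Subtype.ext (smul_add (k : ℤ) (x : Λ) (y : Λ))
        map_smul' := fun c x => Subtype.ext (smul_comm (k : ℤ) c (x : Λ)) }
    have hinj : Function.Injective g := by
      intro x y hxy
      have h2 : (k : ℤ) • (x : Λ) = (k : ℤ) • (y : Λ) := congrArg Subtype.val hxy
      exact Subtype.ext (smul_right_injective Λ (by exact_mod_cast hk) h2)
    exact LinearMap.finrank_le_finrank_of_injective hinj

lemma BD_finrank_range_add_finrank_ker (f : Λ →ₗ[ℤ] Λ) :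
    Module.finrank ℤ ↥(LinearMap.range f) + Module.finrank ℤ ↥(LinearMap.ker f)
      = Module.finrank ℤ Λ := by
  haveI : IsNoetherian ℤ Λ := isNoetherian_of_isNoetherianRing_of_finite ℤ Λ
  have h := LinearMap.rank_range_add_rank_ker f
  have h1 : Module.rank ℤ ↥(LinearMap.range f) < Cardinal.aleph0 :=
    Module.rank_lt_aleph0 ℤ _
  have h2 : Module.rank ℤ ↥(LinearMap.ker f) < Cardinal.aleph0 :=
    Module.rank_lt_aleph0 ℤ _
  have h3 := congrArg Cardinal.toNat h
  rwa [Cardinal.toNat_add h1 h2] at h3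

end FreeAmbient

/-- relindex is invariant under an injective linear map. -/
lemma BDrel_map_inj {g : Λ →ₗ[ℤ] Λ} (hg : Function.Injective g) (A B : Submodule ℤ Λ) :
    BDrel (A.map g) (B.map g) = BDrel A B := by
  rw [BDrel_eq_card, BDrel_eq_card]
  refine (Nat.card_congr ?_).symm
  refine (Submodule.Quotient.equiv _ _ (Submodule.equivMapOfInjective g hg B) ?_).toEquiv
  ext ⟨z, hz⟩
  simp only [Submodule.mem_map, Submodule.mem_comap, Submodule.coe_subtype]
  constructor
  · rintro ⟨⟨y, hy⟩, hyA, hmapeq⟩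
    exact ⟨y, hyA, congrArg Subtype.val hmapeq⟩
  · rintro ⟨a, haA, haz⟩
    obtain ⟨b, hb, rfl⟩ := hz
    have hab : a = b := hg haz
    subst hab
    exact ⟨⟨a, hb⟩, haA, Subtype.ext haz⟩

lemma BD_coe_pow (F : Λ ≃ₗ[ℤ] Λ) (k : ℕ) :
    ((F ^ k : Λ ≃ₗ[ℤ] Λ) : Λ →ₗ[ℤ] Λ) = ((F : Λ →ₗ[ℤ] Λ)) ^ k := by
  induction k with
  | zero => rfl
  | succ m ih =>
    ext x
    rw [pow_succ, pow_succ]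
    simp only [LinearEquiv.coe_coe, Module.End.mul_apply, ← ih]
    rfl

lemma BD_range_sub_le_ker_sum (φ : Λ →ₗ[ℤ] Λ) {n : ℕ} (hφ : φ ^ n = 1) :
    LinearMap.range (φ - LinearMap.id) ≤ LinearMap.ker (∑ i ∈ Finset.range n, φ ^ i) := by
  rintro _ ⟨x, rfl⟩
  rw [LinearMap.mem_ker, ← Module.End.one_eq_id, ← Module.End.mul_apply, geom_sum_mul, hφ,
    sub_self]
  rfl

lemma BD_smul_mem_range_of_mem_ker_sum (φ : Λ →ₗ[ℤ] Λ) {n : ℕ}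
    {x : Λ} (hx : x ∈ LinearMap.ker (∑ i ∈ Finset.range n, φ ^ i)) :
    (n : ℤ) • x ∈ LinearMap.range (φ - LinearMap.id) := by
  have hH : (φ - 1) * (∑ i ∈ Finset.range n, ∑ j ∈ Finset.range i, φ ^ j)
      = (∑ i ∈ Finset.range n, φ ^ i) - (n : ℕ) • (1 : Λ →ₗ[ℤ] Λ) := by
    rw [Finset.mul_sum]
    have hterm : ∀ i ∈ Finset.range n,
        (φ - 1) * ∑ j ∈ Finset.range i, φ ^ j = φ ^ i - 1 :=
      fun i _ => mul_geom_sum φ i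
    rw [Finset.sum_congr rfl hterm, Finset.sum_sub_distrib, Finset.sum_const,
      Finset.card_range]
  have hker : (∑ i ∈ Finset.range n, φ ^ i) x = 0 := hx
  have happ := congrArg (fun g : Λ →ₗ[ℤ] Λ => g x) hH
  simp only [Module.End.mul_apply, LinearMap.sub_apply, LinearMap.smul_apply,
    Module.End.one_apply, hker] at happ
  refine ⟨-((∑ i ∈ Finset.range n, ∑ j ∈ Finset.range i, φ ^ j) x), ?_⟩
  rw [map_neg, LinearMap.sub_apply, LinearMap.id_apply, happ]
  simp [natCast_zsmul]

/-- Step 1: the fixed points of the induced automorphism on `Λ/P` are counted by the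
index of `P ⊔ im(φ - 1)`. -/
lemma BD_card_eqLocus (P : Submodule ℤ Λ) (φ : Λ →ₗ[ℤ] Λ)
    (hP : P ≤ P.comap φ) [Finite (Λ ⧸ P)] :
    Nat.card ↥(LinearMap.eqLocus (Submodule.mapQ P P φ hP) LinearMap.id)
      = Nat.card (Λ ⧸ (P ⊔ LinearMap.range (φ - LinearMap.id))) := by
  rw [LinearMap.eqLocus_eq_ker_sub, BD_card_ker_eq_card_coker]
  have hcomp : (Submodule.mapQ P P φ hP - LinearMap.id) ∘ₗ P.mkQ
      = P.mkQ ∘ₗ (φ - LinearMap.id) := by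
    ext x
    simp [Submodule.mapQ_apply, Submodule.mkQ_apply]
  have hrange : LinearMap.range (Submodule.mapQ P P φ hP - LinearMap.id)
      = (LinearMap.range (φ - LinearMap.id)).map P.mkQ := by
    rw [← LinearMap.range_comp_of_range_eq_top
      (Submodule.mapQ P P φ hP - LinearMap.id) (Submodule.range_mkQ P), hcomp,
      LinearMap.range_comp]
  rw [hrange]
  exact Nat.card_congr (Submodule.quotientQuotientEquivQuotientSup P _).toEquiv

/-- Step 2: the `e`-torsion of the quotient `W / I'` is counted by a relative index. -/
lemma BD_card_torsion_quotient [Module.Free ℤ Λ] [Module.Finite ℤ Λ]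
    (W I' : Submodule ℤ Λ) (hIW : I' ≤ W) (e : ℕ)
    [Finite (↥W ⧸ I'.comap W.subtype)] :
    Nat.card {b : ↥W ⧸ I'.comap W.subtype // (e : ℤ) • b = 0}
      = BDrel (I' ⊔ Submodule.map ((e : ℤ) • (LinearMap.id : Λ →ₗ[ℤ] Λ)) W) W := by
  have h1 : Nat.card {b : ↥W ⧸ I'.comap W.subtype // (e : ℤ) • b = 0}
      = Nat.card (LinearMap.ker ((e : ℤ) •
          (LinearMap.id : (↥W ⧸ I'.comap W.subtype) →ₗ[ℤ] (↥W ⧸ I'.comap W.subtype)))) := by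
    apply Nat.card_congr
    apply Equiv.subtypeEquivRight
    intro b
    rw [LinearMap.mem_ker, LinearMap.smul_apply, LinearMap.id_apply]
  rw [h1, BD_card_ker_eq_card_coker]
  have hcomp : ((e : ℤ) • (LinearMap.id : (↥W ⧸ I'.comap W.subtype) →ₗ[ℤ] _)) ∘ₗ
        (I'.comap W.subtype).mkQ
      = (I'.comap W.subtype).mkQ ∘ₗ ((e : ℤ) • (LinearMap.id : ↥W →ₗ[ℤ] ↥W)) := by
    ext x
    simp
  have hrange : LinearMap.range ((e : ℤ) • (LinearMap.id : (↥W ⧸ I'.comap W.subtype) →ₗ[ℤ] _))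
      = (LinearMap.range ((e : ℤ) • (LinearMap.id : ↥W →ₗ[ℤ] ↥W))).map
          (I'.comap W.subtype).mkQ := by
    rw [← LinearMap.range_comp_of_range_eq_top _ (Submodule.range_mkQ _), hcomp,
      LinearMap.range_comp]
  rw [hrange, Nat.card_congr (Submodule.quotientQuotientEquivQuotientSup _ _).toEquiv]
  have hsub : I'.comap W.subtype ⊔ LinearMap.range ((e : ℤ) • (LinearMap.id : ↥W →ₗ[ℤ] ↥W))
      = (I' ⊔ Submodule.map ((e : ℤ) • (LinearMap.id : Λ →ₗ[ℤ] Λ)) W).comap W.subtype := by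
    rw [← BD_comap_subtype_map_smul]
    apply le_antisymm
    · exact sup_le (Submodule.comap_mono le_sup_left) (Submodule.comap_mono le_sup_right)
    · rintro ⟨x, hxW⟩ hx
      simp only [Submodule.mem_comap, Submodule.coe_subtype] at hx
      obtain ⟨i, hi, y, hy, hxiy⟩ := Submodule.mem_sup.mp hx
      apply Submodule.mem_sup.mpr
      have hiW : i ∈ W := hIW hi
      have hyW : y ∈ W := by
        obtain ⟨w, hw, rfl⟩ := hy
        simpa using W.smul_mem (e : ℤ) hw
      refine ⟨⟨i, hiW⟩, by simpa [Submodule.mem_comap] using hi,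
        ⟨y, hyW⟩, by simpa [Submodule.mem_comap] using hy, ?_⟩
      exact Subtype.ext hxiy
  rw [hsub]
  exact (BDrel_eq_card _ _).symm

end BDAux

/-- Betts–Dokchitser: let `Λ` be a free `ℤ`-module of finite rank, `Λ' ⊆ Λ` a
finite-index submodule, and `F` an automorphism of `Λ` of order `n` preserving `Λ'`.
With `G = ⟨F⟩`, let `B = im(H¹(G,Λ') → H¹(G,Λ))`, realised as the subquotient
`((ker N ⊓ Λ') ⊔ im(F-1)) / im(F-1)` where `N = Σ_{i<n} F^i`.  Then for `e ≥ 1`,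
`|(Λ/eΛ')^F| = |(Λ/Λ')^F| · |B[e]| · e^r` with `r = rk Λ^F`.
(The hypotheses `h1`, `he1` that `F` descends to the quotients are automatic from
`hF`.) -/
theorem stmt_15 {Λ : Type*} [AddCommGroup Λ] [Module.Free ℤ Λ] [Module.Finite ℤ Λ]
    (Λ' : Submodule ℤ Λ) (hfin : Finite (Λ ⧸ Λ'))
    (F : Λ ≃ₗ[ℤ] Λ) (n : ℕ) (hn : 0 < n) (hord : orderOf F = n)
    (e : ℕ) (he : 1 ≤ e)
    (hF : Submodule.map (F : Λ →ₗ[ℤ] Λ) Λ' = Λ')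
    (h1 : Λ' ≤ Λ'.comap (F : Λ →ₗ[ℤ] Λ))
    (he1 : Submodule.map ((e : ℤ) • (LinearMap.id : Λ →ₗ[ℤ] Λ)) Λ' ≤
      (Submodule.map ((e : ℤ) • (LinearMap.id : Λ →ₗ[ℤ] Λ)) Λ').comap (F : Λ →ₗ[ℤ] Λ)) :
    Nat.card
        ↥(LinearMap.eqLocus
            (Submodule.mapQ (Submodule.map ((e : ℤ) • (LinearMap.id : Λ →ₗ[ℤ] Λ)) Λ')
              (Submodule.map ((e : ℤ) • (LinearMap.id : Λ →ₗ[ℤ] Λ)) Λ')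
              (F : Λ →ₗ[ℤ] Λ) he1)
            LinearMap.id) =
      Nat.card
          ↥(LinearMap.eqLocus (Submodule.mapQ Λ' Λ' (F : Λ →ₗ[ℤ] Λ) h1) LinearMap.id) *
        Nat.card
          {b : ↥((LinearMap.ker (∑ i ∈ Finset.range n, ((F : Λ →ₗ[ℤ] Λ) ^ i)) ⊓ Λ') ⊔
                LinearMap.range ((F : Λ →ₗ[ℤ] Λ) - LinearMap.id)) ⧸
              Submodule.comap
                (((LinearMap.ker (∑ i ∈ Finset.range n, ((F : Λ →ₗ[ℤ] Λ) ^ i)) ⊓ Λ') ⊔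
                    LinearMap.range ((F : Λ →ₗ[ℤ] Λ) - LinearMap.id)).subtype)
                (LinearMap.range ((F : Λ →ₗ[ℤ] Λ) - LinearMap.id)) //
            (e : ℤ) • b = 0} *
        e ^ Module.finrank ℤ ↥(LinearMap.eqLocus (F : Λ →ₗ[ℤ] Λ) LinearMap.id) := by
  classical
  haveI : IsNoetherian ℤ Λ := isNoetherian_of_isNoetherianRing_of_finite ℤ Λ
  haveI := hfin
  -- Notation
  set φ : Λ →ₗ[ℤ] Λ := (F : Λ →ₗ[ℤ] Λ) with hφdef
  set f : Λ →ₗ[ℤ] Λ := φ - LinearMap.id with hfdef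
  set Nn : Λ →ₗ[ℤ] Λ := ∑ i ∈ Finset.range n, φ ^ i with hNdef
  set η : Λ →ₗ[ℤ] Λ := (e : ℤ) • LinearMap.id with hηdef
  set L : Submodule ℤ Λ := Λ' with hLdef
  set I : Submodule ℤ Λ := LinearMap.range f with hIdef
  set K : Submodule ℤ Λ := LinearMap.ker Nn ⊓ L with hKdef
  set KI : Submodule ℤ Λ := K ⊔ I with hKIdef
  set eL : Submodule ℤ Λ := Submodule.map η L with heLdef
  set eKI : Submodule ℤ Λ := Submodule.map η KI with heKIdef
  set C : Submodule ℤ Λ := K ⊓ I with hCdef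
  set Ie : Submodule ℤ Λ := Submodule.comap η I with hIedef
  -- numbers
  set m : ℕ := Module.finrank ℤ Λ with hmdef
  set dI : ℕ := Module.finrank ℤ ↥I with hdIdef
  -- basic positivity
  have he0 : (e : ℤ) ≠ 0 := by exact_mod_cast Nat.one_le_iff_ne_zero.mp he
  have hn0 : n ≠ 0 := hn.ne'
  -- φ ^ n = 1
  have hFn : F ^ n = 1 := by rw [← hord]; exact pow_orderOf_eq_one F
  have hφn : φ ^ n = 1 := by
    rw [hφdef, ← BD_coe_pow F n, hFn]
    rfl
  have hIker : I ≤ LinearMap.ker Nn := BD_range_sub_le_ker_sum φ hφn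
  have hnsmul : ∀ x ∈ LinearMap.ker Nn, (n : ℤ) • x ∈ I := fun x hx =>
    BD_smul_mem_range_of_mem_ker_sum φ hx
  -- the annihilating constant of Λ/L
  set c : ℕ := Nat.card (Λ ⧸ L) with hcdef
  have hc0 : c ≠ 0 := Nat.card_pos.ne'
  have hcL : ∀ x : Λ, (c : ℤ) • x ∈ L := by
    intro x
    have hq : c • (Submodule.Quotient.mk x : Λ ⧸ L) = 0 := card_nsmul_eq_zero'
    have hq' : ((c : ℤ) • (Submodule.Quotient.mk x : Λ ⧸ L)) = 0 := by
      rwa [natCast_zsmul]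
    rwa [← Submodule.Quotient.mk_smul, Submodule.Quotient.mk_eq_zero] at hq'
  -- η facts
  have hηapp : ∀ x : Λ, η x = (e : ℤ) • x := fun x => rfl
  have hηinj : Function.Injective η := by
    intro x y hxy
    rw [hηapp, hηapp] at hxy
    exact smul_right_injective Λ he0 hxy
  have hmap_le : ∀ S : Submodule ℤ Λ, Submodule.map η S ≤ S := by
    rintro S _ ⟨x, hx, rfl⟩
    rw [hηapp]
    exact S.smul_mem _ hx
  -- lattice facts
  have hKL : K ≤ L := inf_le_right
  have hKker : K ≤ LinearMap.ker Nn := inf_le_left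
  have hKIker : KI ≤ LinearMap.ker Nn := sup_le hKker hIker
  have hCL : C ≤ L := le_trans inf_le_left hKL
  have hCI : C ≤ I := inf_le_right
  have hIIe : I ≤ Ie := by
    intro x hx
    rw [hIedef, Submodule.mem_comap, hηapp]
    exact I.smul_mem _ hx
  have hLI : L ⊓ I = C := by
    rw [hCdef, hKdef, inf_assoc, inf_eq_right.mpr (le_trans inf_le_right hIker)]
  -- the three finiteness facts
  haveI hfinL : Finite (Λ ⧸ L) := hfin
  haveI hfin_eL : Finite (Λ ⧸ eL) := by
    apply BD_finite_quotient eL (c * e) (by positivity)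
    intro x
    rw [heLdef]
    refine ⟨(c : ℤ) • x, hcL x, ?_⟩
    rw [hηapp]
    rw [← mul_smul]
    push_cast
    ring_nf
  haveI hfin_B : Finite (↥KI ⧸ I.comap KI.subtype) := by
    apply BD_finite_quotient (I.comap KI.subtype) n hn0
    intro w
    rw [Submodule.mem_comap]
    have : (KI.subtype) ((n : ℤ) • w) = (n : ℤ) • (w : Λ) := rfl
    rw [this]
    exact hnsmul _ (hKIker w.2)
  -- rank facts
  have hrkL : Module.finrank ℤ ↥L = m := by
    have h := BD_finrank_eq_of_le_of_smul (T := L) (S := (⊤ : Submodule ℤ Λ)) le_top c hc0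
      (fun x _ => hcL x)
    rw [h, hmdef, finrank_top]
  have hrkKI : Module.finrank ℤ ↥KI = dI := by
    rw [hdIdef]
    exact (BD_finrank_eq_of_le_of_smul (T := I) (S := KI) le_sup_right n hn0
      (fun x hx => hnsmul x (hKIker hx))).symm
  have hrkC : Module.finrank ℤ ↥C = dI := by
    rw [hdIdef]
    apply BD_finrank_eq_of_le_of_smul (T := C) (S := I) hCI (n * c) (by positivity)
    intro x hx
    have hmul : ((n * c : ℕ) : ℤ) • x = (n : ℤ) • ((c : ℤ) • x) := by
      rw [← mul_smul]; push_cast; ring_nf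
    rw [hmul, hCdef]
    refine Submodule.mem_inf.mpr ⟨Submodule.mem_inf.mpr ⟨?_, ?_⟩, ?_⟩
    · exact LinearMap.ker _ |>.smul_mem _ (LinearMap.ker _ |>.smul_mem _ (hIker hx))
    · exact L.smul_mem _ (hcL x)
    · exact I.smul_mem _ (I.smul_mem _ hx)
  have hrm : m = dI + Module.finrank ℤ ↥(LinearMap.ker f) := by
    rw [hmdef, hdIdef, hIdef]
    exact (BD_finrank_range_add_finrank_ker f).symm
  -- submodule identities
  have hmod1 : (I ⊔ eL) ⊓ L = C ⊔ eL := by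
    rw [sup_comm I eL, sup_inf_assoc_of_le I (hmap_le L), inf_comm I L, hLI, sup_comm]
  have heLC : eL ⊓ C = Submodule.map η (K ⊓ Ie) := by
    ext z
    constructor
    · rintro ⟨hzeL, hzC⟩
      obtain ⟨l, hl, rfl⟩ := hzeL
      have hzI : η l ∈ I := (Submodule.mem_inf.mp hzC).2
      have hlker : l ∈ LinearMap.ker Nn := by
        have hNz : Nn (η l) = 0 := hIker hzI
        rw [hηapp, map_smul] at hNz
        rw [LinearMap.mem_ker]
        exact (smul_eq_zero.mp hNz).resolve_left he0
      exact ⟨l, Submodule.mem_inf.mpr ⟨Submodule.mem_inf.mpr ⟨hlker, hl⟩, hzI⟩, rfl⟩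
    · rintro ⟨k, hk, rfl⟩
      obtain ⟨hkK, hkIe⟩ := Submodule.mem_inf.mp hk
      refine Submodule.mem_inf.mpr ⟨⟨k, (Submodule.mem_inf.mp hkK).2, rfl⟩, ?_⟩
      refine Submodule.mem_inf.mpr ⟨?_, hkIe⟩
      rw [hηapp]
      exact K.smul_mem _ hkK
  have heKI_I : eKI ⊓ I = Submodule.map η (KI ⊓ Ie) := by
    ext z
    constructor
    · rintro ⟨hzeKI, hzI⟩
      obtain ⟨w, hw, rfl⟩ := hzeKI
      exact ⟨w, Submodule.mem_inf.mpr ⟨hw, hzI⟩, rfl⟩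
    · rintro ⟨w, hw, rfl⟩
      obtain ⟨hwKI, hwIe⟩ := Submodule.mem_inf.mp hw
      exact Submodule.mem_inf.mpr ⟨⟨w, hwKI, rfl⟩, hwIe⟩
  have hmod2 : KI ⊓ Ie = (K ⊓ Ie) ⊔ I := by
    rw [hKIdef, sup_comm K I, sup_inf_assoc_of_le K hIIe, sup_comm I (K ⊓ Ie)]
  -- Step 1: translate both fixed-point counts into indices
  have hLHS : Nat.card ↥(LinearMap.eqLocus (Submodule.mapQ eL eL φ he1) LinearMap.id)
      = Nat.card (Λ ⧸ (eL ⊔ I)) := by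
    rw [BD_card_eqLocus eL φ he1, ← hfdef, ← hIdef]
  have hA : Nat.card ↥(LinearMap.eqLocus (Submodule.mapQ L L φ h1) LinearMap.id)
      = Nat.card (Λ ⧸ (L ⊔ I)) := by
    rw [BD_card_eqLocus L φ h1, ← hfdef, ← hIdef]
  have hB : Nat.card {b : ↥KI ⧸ I.comap KI.subtype // (e : ℤ) • b = 0}
      = BDrel (I ⊔ eKI) KI := by
    rw [BD_card_torsion_quotient KI I le_sup_right e, ← hηdef, ← heKIdef]
  have hloc : LinearMap.eqLocus φ LinearMap.id = LinearMap.ker f := by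
    rw [hfdef]
    exact LinearMap.eqLocus_eq_ker_sub φ LinearMap.id
  rw [hLHS, hA, hB, hloc]
  set r : ℕ := Module.finrank ℤ ↥(LinearMap.ker f) with hrdef
  have hrm : m = dI + r := by
    rw [hrdef, hmdef, hdIdef, hIdef]
    exact (BD_finrank_range_add_finrank_ker f).symm
  -- switch to index notation
  rw [sup_comm eL I, sup_comm L I, ← BDindex_eq_card, ← BDindex_eq_card]
  -- the index chain
  have heLL : eL ≤ L := hmap_le L
  have g1 : BDrel (I ⊔ eL) (I ⊔ L) * (I ⊔ L).toAddSubgroup.index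
      = (I ⊔ eL).toAddSubgroup.index := BDrel_mul_index (sup_le_sup_left heLL I)
  have g2 : BDrel (I ⊔ eL) (I ⊔ L) = BDrel (I ⊔ eL) L := by
    have hs : I ⊔ L = L ⊔ (I ⊔ eL) := by
      rw [sup_comm L (I ⊔ eL), sup_assoc, sup_eq_right.mpr heLL]
    rw [hs, BDrel_sup_right]
  have g3 : BDrel (I ⊔ eL) L = BDrel (C ⊔ eL) L := by
    rw [← BDrel_inf_right (I ⊔ eL) L, hmod1]
  have hCeL_le_L : C ⊔ eL ≤ L := sup_le hCL heLL
  have g4 : BDrel eL (C ⊔ eL) * BDrel (C ⊔ eL) L = BDrel eL L :=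
    BDrel_mul_BDrel le_sup_right hCeL_le_L
  have g5 : BDrel eL L = e ^ m := by
    rw [heLdef, hηdef, BDrel_map_smul_self, hrkL]
  have g6 : BDrel eL (C ⊔ eL) = BDrel eL C := BDrel_sup_right C eL
  have hIKI : I ≤ KI := le_sup_right
  have heKIKI : eKI ≤ KI := heKIdef ▸ hmap_le KI
  have g8 : BDrel eKI (I ⊔ eKI) * BDrel (I ⊔ eKI) KI = BDrel eKI KI :=
    BDrel_mul_BDrel le_sup_right (sup_le hIKI heKIKI)
  have g9 : BDrel eKI KI = e ^ dI := by
    rw [heKIdef, hηdef, BDrel_map_smul_self, hrkKI]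
  have g10 : BDrel eKI (I ⊔ eKI) = BDrel eKI I := BDrel_sup_right I eKI
  -- x = y
  have heC_le : Submodule.map η C ≤ eL ⊓ C :=
    le_inf (by rw [heLdef]; exact Submodule.map_mono hCL) (hmap_le C)
  have t1 : BDrel (Submodule.map η C) (eL ⊓ C) * BDrel (eL ⊓ C) C
      = BDrel (Submodule.map η C) C := BDrel_mul_BDrel heC_le inf_le_right
  have t2 : BDrel (Submodule.map η C) C = e ^ dI := by
    rw [hηdef, BDrel_map_smul_self, hrkC]
  have t3 : BDrel (eL ⊓ C) C = BDrel eL C := BDrel_inf_right eL C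
  have t5 : BDrel (Submodule.map η C) (eL ⊓ C) = BDrel C (K ⊓ Ie) := by
    rw [heLC]
    exact BDrel_map_inj hηinj C (K ⊓ Ie)
  have heI_le : Submodule.map η I ≤ eKI ⊓ I :=
    le_inf (by rw [heKIdef]; exact Submodule.map_mono hIKI) (hmap_le I)
  have t8 : BDrel (Submodule.map η I) (eKI ⊓ I) * BDrel (eKI ⊓ I) I
      = BDrel (Submodule.map η I) I := BDrel_mul_BDrel heI_le inf_le_right
  have t8' : BDrel (Submodule.map η I) I = e ^ dI := by
    rw [hηdef, BDrel_map_smul_self, hdIdef]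
  have t9 : BDrel (eKI ⊓ I) I = BDrel eKI I := BDrel_inf_right eKI I
  have t6 : BDrel (Submodule.map η I) (eKI ⊓ I) = BDrel I (KI ⊓ Ie) := by
    rw [heKI_I]
    exact BDrel_map_inj hηinj I (KI ⊓ Ie)
  have hICKIe : I ⊓ (K ⊓ Ie) = C := by
    rw [inf_comm K Ie, ← inf_assoc, inf_eq_left.mpr hIIe, inf_comm I K, hCdef]
  have t7 : BDrel C (K ⊓ Ie) = BDrel I (KI ⊓ Ie) := by
    rw [hmod2, BDrel_sup_right (K ⊓ Ie) I, ← BDrel_inf_right I (K ⊓ Ie), hICKIe]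
  have hw : BDrel (Submodule.map η C) (eL ⊓ C) = BDrel (Submodule.map η I) (eKI ⊓ I) := by
    rw [t5, t6, t7]
  have hep : e ^ dI ≠ 0 := pow_ne_zero _ (by omega)
  have weq1 : BDrel (Submodule.map η C) (eL ⊓ C) * BDrel eL C = e ^ dI := by
    rw [← t3, t1, t2]
  have weq2 : BDrel (Submodule.map η C) (eL ⊓ C) * BDrel eKI I = e ^ dI := by
    rw [hw, ← t9, t8, t8']
  have hw0 : BDrel (Submodule.map η C) (eL ⊓ C) ≠ 0 := by
    intro h0
    rw [h0, zero_mul] at weq1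
    exact hep weq1.symm
  have hxy : BDrel eL C = BDrel eKI I :=
    Nat.eq_of_mul_eq_mul_left (Nat.pos_of_ne_zero hw0) (weq1.trans weq2.symm)
  -- assemble
  have e3 : BDrel eL C * BDrel (C ⊔ eL) L = e ^ m := by
    rw [← g6, g4, g5]
  have e5 : BDrel eKI I * BDrel (I ⊔ eKI) KI = e ^ dI := by
    rw [← g10, g8, g9]
  have hx0 : BDrel eL C ≠ 0 := by
    intro h0
    rw [h0, zero_mul] at e3
    exact (pow_ne_zero m (by omega : e ≠ 0)) e3.symm
  have hkey : BDrel eL C * BDrel (C ⊔ eL) L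
      = BDrel eL C * (BDrel (I ⊔ eKI) KI * e ^ r) := by
    calc BDrel eL C * BDrel (C ⊔ eL) L = e ^ m := e3
      _ = e ^ dI * e ^ r := by rw [hrm, pow_add]
      _ = (BDrel eKI I * BDrel (I ⊔ eKI) KI) * e ^ r := by rw [e5]
      _ = BDrel eL C * (BDrel (I ⊔ eKI) KI * e ^ r) := by rw [← hxy]; ring
  have hp : BDrel (C ⊔ eL) L = BDrel (I ⊔ eKI) KI * e ^ r :=
    Nat.eq_of_mul_eq_mul_left (Nat.pos_of_ne_zero hx0) hkey
  rw [← g1, g2, g3, hp]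
  ring
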